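/- Let ε_1,...,ε_n be i.i.d. Rademacher variables and x an X-valued predictable process with respect to the dyadic filtration. Suppose F ⊆ R^X satisfies the probability bound P(|sup_{f∈F} ∑_{t=1}^n ε_t b_t f(x_t)| > u) ≤ B_p · E[∑_{t=1}^n sup_{f∈F} b_t |f(x_t)|^p] / u^p for every {0,1}-valued predictable truncation process b, where p > 1 and B_p < ∞. Then E[|sup_{f∈F} ∑_{t=1}^n ε_t f(x_t)|] ≤ (1 + B_p · p/(p-1)) · E[(∑_{t=1}^n sup_{f∈F} |f(x_t)|^p)^{1/p}]. -/

import Mathlib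

open Finset

/-- The sign `±1` associated with a Boolean coordinate (Rademacher variable). -/
def sgn (b : Bool) : ℝ := if b then 1 else -1

/-- A process indexed by time `t < n` on the dyadic tree (sign sequences) is predictable if
its value at time `t` depends only on the signs strictly before `t`. -/
def Predictable {n : ℕ} {X : Type*} (x : Fin n → (Fin n → Bool) → X) : Prop :=
  ∀ (t : Fin n) (e e' : Fin n → Bool), (∀ s : Fin n, s < t → e s = e' s) → x t e = x t e'

section Aux
open MeasureTheory

lemma auxInd (c : ℝ) : IntegrableOn (fun u => if u < c then (1:ℝ) else 0) (Set.Ioi 0) := by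
  have h : (fun u => if u < c then (1:ℝ) else 0) = (Set.Iio c).indicator (fun _ => 1) := by
    funext u; simp [Set.indicator_apply]
  rw [h, IntegrableOn, integrable_indicator_iff measurableSet_Iio]
  refine integrableOn_const ?_
  rw [Measure.restrict_apply measurableSet_Iio, Set.Iio_inter_Ioi]
  exact measure_Ioo_lt_top.ne

lemma auxIndInt {c : ℝ} (hc : 0 ≤ c) :
    ∫ u in Set.Ioi (0:ℝ), (if u < c then (1:ℝ) else 0) = c := by
  have h : (fun u => if u < c then (1:ℝ) else 0) = (Set.Iio c).indicator (fun _ => 1) := by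
    funext u; simp [Set.indicator_apply]
  rw [h, setIntegral_indicator measurableSet_Iio, Set.Ioi_inter_Iio]
  simp [Real.volume_Ioo, ENNReal.toReal_ofReal hc, hc]

lemma auxMin {S p : ℝ} (hS : 0 ≤ S) (hp : 1 < p) :
    IntegrableOn (fun u => min S (u ^ p) / u ^ p) (Set.Ioi 0) ∧
    ∫ u in Set.Ioi (0:ℝ), min S (u ^ p) / u ^ p = p / (p - 1) * S ^ ((1:ℝ)/p) := by
  have hp0 : (0:ℝ) < p := by linarith
  rcases hS.eq_or_lt with h0 | hSpos
  · have hEq : Set.EqOn (fun u => min S (u ^ p) / u ^ p) (fun _ => (0:ℝ)) (Set.Ioi 0) := by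
      intro u hu
      have : min S (u ^ p) = 0 := by
        rw [← h0]; exact min_eq_left (Real.rpow_nonneg (le_of_lt hu) p)
      simp [this]
    constructor
    · exact (integrableOn_zero).congr_fun hEq.symm measurableSet_Ioi
    · rw [setIntegral_congr_fun measurableSet_Ioi hEq]
      rw [← h0, Real.zero_rpow (by positivity)]
      simp
  · set a : ℝ := S ^ ((1:ℝ)/p) with ha_def
    have ha : 0 < a := Real.rpow_pos_of_pos hSpos _
    have hap : a ^ p = S := by
      rw [ha_def, ← Real.rpow_mul hS, one_div_mul_cancel (ne_of_gt hp0), Real.rpow_one]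
    have hsplit : Set.Ioc (0:ℝ) a ∪ Set.Ioi a = Set.Ioi 0 := Set.Ioc_union_Ioi_eq_Ioi ha.le
    have hEq1 : Set.EqOn (fun u => min S (u ^ p) / u ^ p) (fun _ => (1:ℝ)) (Set.Ioc 0 a) := by
      intro u hu
      have h1 : u ^ p ≤ S := by
        rw [← hap]; exact Real.rpow_le_rpow hu.1.le hu.2 hp0.le
      have h2 : (0:ℝ) < u ^ p := Real.rpow_pos_of_pos hu.1 p
      simp only [min_eq_right h1]
      exact div_self (ne_of_gt h2)
    have hEq2 : Set.EqOn (fun u => min S (u ^ p) / u ^ p) (fun u => S * u ^ (-p)) (Set.Ioi a) := by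
      intro u hu
      have hu0 : (0:ℝ) < u := ha.trans hu
      have h1 : S ≤ u ^ p := by
        rw [← hap]; exact Real.rpow_le_rpow ha.le (le_of_lt hu) hp0.le
      simp only [min_eq_left h1, Real.rpow_neg hu0.le, div_eq_mul_inv]
    have hI1 : IntegrableOn (fun u => min S (u ^ p) / u ^ p) (Set.Ioc 0 a) :=
      ((integrableOn_const measure_Ioc_lt_top.ne).congr_fun hEq1.symm measurableSet_Ioc)
    have hI2' : IntegrableOn (fun u => S * u ^ (-p)) (Set.Ioi a) :=
      (integrableOn_Ioi_rpow_of_lt (show -p < -1 by linarith) ha).const_mul S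
    have hI2 : IntegrableOn (fun u => min S (u ^ p) / u ^ p) (Set.Ioi a) :=
      hI2'.congr_fun hEq2.symm measurableSet_Ioi
    have hInt : IntegrableOn (fun u => min S (u ^ p) / u ^ p) (Set.Ioi 0) := by
      rw [← hsplit]; exact hI1.union hI2
    refine ⟨hInt, ?_⟩
    rw [← hsplit, setIntegral_union (Set.Ioc_disjoint_Ioi_same) measurableSet_Ioi hI1 hI2]
    have e1 : ∫ u in Set.Ioc (0:ℝ) a, min S (u ^ p) / u ^ p = a := by
      rw [setIntegral_congr_fun measurableSet_Ioc hEq1]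
      simp [Real.volume_Ioc, ENNReal.toReal_ofReal ha.le, ha.le]
    have e2 : ∫ u in Set.Ioi a, min S (u ^ p) / u ^ p = a / (p - 1) := by
      rw [setIntegral_congr_fun measurableSet_Ioi hEq2, integral_const_mul,
        integral_Ioi_rpow_of_lt (by linarith) ha]
      rw [← hap]
      rw [show a ^ p * (-a ^ (-p + 1) / (-p + 1)) = -(a ^ p * a ^ (-p + 1)) / (-p + 1) from by
        ring, ← Real.rpow_add ha, show p + (-p + 1) = 1 from by ring, Real.rpow_one]
      have h2 : p - 1 ≠ 0 := by linarith
      have h3 : -p + 1 ≠ 0 := by linarith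
      field_simp
      ring
    rw [e1, e2]
    have h1 : p - 1 ≠ 0 := by linarith
    field_simp
    ring

lemma mainAux {E : Type*} [Fintype E] (Z S A : E → ℝ) (ν p Bp : ℝ)
    (hν : 0 < ν) (hp : 1 < p) (hBp : 0 ≤ Bp)
    (hZ0 : ∀ e, 0 ≤ Z e) (hS0 : ∀ e, 0 ≤ S e) (hA : ∀ e, A e = S e ^ ((1:ℝ)/p))
    (key : ∀ u : ℝ, 0 < u →
      ν * ∑ e, (if u < Z e then (1:ℝ) else 0)
        ≤ ν * ∑ e, (if u < A e then (1:ℝ) else 0)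
          + Bp * ν * ∑ e, (min (S e) (u ^ p) / u ^ p)) :
    ν * ∑ e, Z e ≤ (1 + Bp * (p / (p - 1))) * (ν * ∑ e, A e) := by
  have hA0 : ∀ e, 0 ≤ A e := fun e => (hA e) ▸ Real.rpow_nonneg (hS0 e) _
  have hIntF : IntegrableOn (fun u => ν * ∑ e, (if u < Z e then (1:ℝ) else 0))
      (Set.Ioi 0) := by
    exact (integrable_finset_sum _ fun e _ => auxInd (Z e)).const_mul ν
  have hIntA : IntegrableOn (fun u => ν * ∑ e, (if u < A e then (1:ℝ) else 0))
      (Set.Ioi 0) := by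
    exact (integrable_finset_sum _ fun e _ => auxInd (A e)).const_mul ν
  have hIntM : IntegrableOn (fun u => Bp * ν * ∑ e, (min (S e) (u ^ p) / u ^ p))
      (Set.Ioi 0) := by
    exact (integrable_finset_sum _ fun e _ => (auxMin (hS0 e) hp).1).const_mul (Bp * ν)
  have hIntG : IntegrableOn (fun u => ν * ∑ e, (if u < A e then (1:ℝ) else 0)
      + Bp * ν * ∑ e, (min (S e) (u ^ p) / u ^ p)) (Set.Ioi 0) := hIntA.add hIntM
  have hF : ∫ u in Set.Ioi (0:ℝ), (ν * ∑ e, if u < Z e then (1:ℝ) else 0)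
      = ν * ∑ e, Z e := by
    rw [integral_const_mul, integral_finset_sum _ fun e _ => auxInd (Z e)]
    exact congrArg (ν * ·) (Finset.sum_congr rfl fun e _ => auxIndInt (hZ0 e))
  have hG : ∫ u in Set.Ioi (0:ℝ), (ν * ∑ e, (if u < A e then (1:ℝ) else 0)
      + Bp * ν * ∑ e, (min (S e) (u ^ p) / u ^ p))
      = ν * ∑ e, A e + Bp * ν * (p / (p - 1) * ∑ e, A e) := by
    rw [integral_add hIntA hIntM, integral_const_mul, integral_const_mul,
      integral_finset_sum _ fun e _ => auxInd (A e),
      integral_finset_sum _ fun e _ => (auxMin (hS0 e) hp).1]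
    congr 1
    · exact congrArg (ν * ·) (Finset.sum_congr rfl fun e _ => auxIndInt (hA0 e))
    · have h1 : ∀ e : E, (∫ u in Set.Ioi (0:ℝ), min (S e) (u ^ p) / u ^ p)
          = p / (p - 1) * A e := fun e => by rw [(auxMin (hS0 e) hp).2, hA e]
      rw [Finset.sum_congr rfl fun e _ => h1 e, ← Finset.mul_sum]
  calc ν * ∑ e, Z e
      = ∫ u in Set.Ioi (0:ℝ), (ν * ∑ e, if u < Z e then (1:ℝ) else 0) := hF.symm
    _ ≤ ∫ u in Set.Ioi (0:ℝ), (ν * ∑ e, (if u < A e then (1:ℝ) else 0)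
          + Bp * ν * ∑ e, (min (S e) (u ^ p) / u ^ p)) :=
        setIntegral_mono_on hIntF hIntG measurableSet_Ioi fun u hu => key u hu
    _ = ν * ∑ e, A e + Bp * ν * (p / (p - 1) * ∑ e, A e) := hG
    _ = (1 + Bp * (p / (p - 1))) * (ν * ∑ e, A e) := by ring

end Aux

/-- Integrating a polynomial tail into an in-expectation bound: if for every `{0,1}`-valued
predictable truncation `b` and every `u > 0`,
`P(|sup_f ∑_t ε_t b_t f(x_t)| > u) ≤ B_p E[∑_t sup_f b_t |f(x_t)|^p]/u^p`, then
`E|sup_f ∑_t ε_t f(x_t)| ≤ (1 + B_p p/(p-1)) E[(∑_t sup_f |f(x_t)|^p)^{1/p}]`. -/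
theorem stmt16 {X : Type*} {ι : Type*} [Nonempty ι] (f : ι → X → ℝ)
    (n : ℕ) (x : Fin n → (Fin n → Bool) → X) (hx : Predictable x)
    (p Bp : ℝ) (hp : 1 < p) (hBp : 0 ≤ Bp)
    (htail : ∀ b : Fin n → (Fin n → Bool) → ℝ, Predictable b →
      (∀ t e, b t e = 0 ∨ b t e = 1) → ∀ u : ℝ, 0 < u →
      ((Finset.univ.filter fun e : Fin n → Bool =>
          |⨆ i, ∑ t, sgn (e t) * b t e * f i (x t e)| > u).card : ℝ) / 2 ^ n
        ≤ Bp * (((2 : ℝ) ^ n)⁻¹ * ∑ e : Fin n → Bool,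
            ∑ t, ⨆ i, b t e * |f i (x t e)| ^ p) / u ^ p) :
    ((2 : ℝ) ^ n)⁻¹ * ∑ e : Fin n → Bool, |⨆ i, ∑ t, sgn (e t) * f i (x t e)|
      ≤ (1 + Bp * (p / (p - 1)))
          * (((2 : ℝ) ^ n)⁻¹ * ∑ e : Fin n → Bool,
              (∑ t, ⨆ i, |f i (x t e)| ^ p) ^ ((1:ℝ)/p)) := by
  have hp0 : (0:ℝ) < p := by linarith
  have hν : (0:ℝ) < ((2:ℝ)^n)⁻¹ := by positivity
  have hg0 : ∀ (t : Fin n) (e : Fin n → Bool), (0:ℝ) ≤ ⨆ i, |f i (x t e)| ^ p :=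
    fun t e => Real.iSup_nonneg fun i => Real.rpow_nonneg (abs_nonneg _) p
  have hS0 : ∀ e : Fin n → Bool, (0:ℝ) ≤ ∑ t, ⨆ i, |f i (x t e)| ^ p :=
    fun e => Finset.sum_nonneg fun t _ => hg0 t e
  refine mainAux (fun e => |⨆ i, ∑ t, sgn (e t) * f i (x t e)|)
    (fun e => ∑ t, ⨆ i, |f i (x t e)| ^ p)
    (fun e => (∑ t, ⨆ i, |f i (x t e)| ^ p) ^ ((1:ℝ)/p))
    _ p Bp hν hp hBp (fun e => abs_nonneg _) hS0 (fun e => rfl) ?_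
  intro u hu
  have hup : (0:ℝ) < u ^ p := Real.rpow_pos_of_pos hu p
  set b : Fin n → (Fin n → Bool) → ℝ :=
    fun t e => if (∑ s ∈ Finset.univ.filter (· ≤ t), ⨆ i, |f i (x s e)| ^ p) ≤ u ^ p
      then 1 else 0 with hb_def
  have hbpred : Predictable b := by
    intro t e e' h
    have hsum : (∑ s ∈ Finset.univ.filter (· ≤ t), ⨆ i, |f i (x s e)| ^ p)
        = ∑ s ∈ Finset.univ.filter (· ≤ t), ⨆ i, |f i (x s e')| ^ p := by
      refine Finset.sum_congr rfl fun s hs => ?_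
      have hst : s ≤ t := by simpa using hs
      rw [hx s e e' fun s' hs' => h s' (lt_of_lt_of_le hs' hst)]
    simp only [hb_def, hsum]
  have hb01 : ∀ t e, b t e = 0 ∨ b t e = 1 := by
    intro t e
    simp only [hb_def]
    split_ifs <;> simp
  have hbg : ∀ t e, (⨆ i, b t e * |f i (x t e)| ^ p)
      = b t e * ⨆ i, |f i (x t e)| ^ p := by
    intro t e
    rcases hb01 t e with h | h <;> simp [h]
  have htrunc : ∀ e, (∑ t, ⨆ i, b t e * |f i (x t e)| ^ p)
      ≤ min (∑ t, ⨆ i, |f i (x t e)| ^ p) (u ^ p) := by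
    intro e
    rw [le_min_iff]
    constructor
    · simp only [hbg]
      refine Finset.sum_le_sum fun t _ => ?_
      rcases hb01 t e with h | h
      · simp [h, hg0 t e]
      · simp [h]
    · have hrw : (∑ t, ⨆ i, b t e * |f i (x t e)| ^ p)
          = ∑ t ∈ Finset.univ.filter (fun t =>
              (∑ s ∈ Finset.univ.filter (· ≤ t), ⨆ i, |f i (x s e)| ^ p) ≤ u ^ p),
            ⨆ i, |f i (x t e)| ^ p := by
        rw [Finset.sum_filter]
        refine Finset.sum_congr rfl fun t _ => ?_
        rw [hbg]
        by_cases h : (∑ s ∈ Finset.univ.filter (· ≤ t), ⨆ i, |f i (x s e)| ^ p) ≤ u ^ p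
        · simp [hb_def, h]
        · simp [hb_def, h]
      rw [hrw]
      set T := Finset.univ.filter (fun t =>
        (∑ s ∈ Finset.univ.filter (· ≤ t), ⨆ i, |f i (x s e)| ^ p) ≤ u ^ p) with hT
      rcases T.eq_empty_or_nonempty with hTe | hTne
      · simp [hTe, hup.le]
      · have ht0 : T.max' hTne ∈ T := T.max'_mem hTne
        have hcum : (∑ s ∈ Finset.univ.filter (· ≤ T.max' hTne),
            ⨆ i, |f i (x s e)| ^ p) ≤ u ^ p := by
          simpa [hT] using (Finset.mem_filter.1 ht0).2
        refine le_trans (Finset.sum_le_sum_of_subset_of_nonneg ?_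
          fun s _ _ => hg0 s e) hcum
        intro t ht
        simp only [Finset.mem_filter, Finset.mem_univ, true_and]
        exact T.le_max' t ht
  have hZb : ∀ e : Fin n → Bool, (∑ t, ⨆ i, |f i (x t e)| ^ p) ^ ((1:ℝ)/p) ≤ u →
      (⨆ i, ∑ t, sgn (e t) * b t e * f i (x t e))
        = ⨆ i, ∑ t, sgn (e t) * f i (x t e) := by
    intro e hAe
    have hSu : (∑ t, ⨆ i, |f i (x t e)| ^ p) ≤ u ^ p := by
      have h1 : ((∑ t, ⨆ i, |f i (x t e)| ^ p) ^ ((1:ℝ)/p)) ^ p ≤ u ^ p :=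
        Real.rpow_le_rpow (Real.rpow_nonneg (hS0 e) _) hAe hp0.le
      rwa [← Real.rpow_mul (hS0 e), one_div_mul_cancel (ne_of_gt hp0), Real.rpow_one] at h1
    refine iSup_congr fun i => Finset.sum_congr rfl fun t _ => ?_
    have hb1 : b t e = 1 := by
      simp only [hb_def]
      rw [if_pos]
      exact le_trans (Finset.sum_le_sum_of_subset_of_nonneg (Finset.filter_subset _ _)
        fun s _ _ => hg0 s e) hSu
    rw [hb1, mul_one]
  have hpt : ∀ e : Fin n → Bool,
      (if u < |⨆ i, ∑ t, sgn (e t) * f i (x t e)| then (1:ℝ) else 0)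
      ≤ (if u < (∑ t, ⨆ i, |f i (x t e)| ^ p) ^ ((1:ℝ)/p) then (1:ℝ) else 0)
        + (if u < |⨆ i, ∑ t, sgn (e t) * b t e * f i (x t e)| then (1:ℝ) else 0) := by
    intro e
    by_cases h1 : u < |⨆ i, ∑ t, sgn (e t) * f i (x t e)|
    · by_cases h2 : u < (∑ t, ⨆ i, |f i (x t e)| ^ p) ^ ((1:ℝ)/p)
      · rw [if_pos h1, if_pos h2]
        split_ifs <;> norm_num
      · have h3 := hZb e (not_lt.1 h2)
        rw [if_pos h1, if_neg h2, h3, if_pos h1]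
        norm_num
    · rw [if_neg h1]
      split_ifs <;> norm_num
  have hsum1 : (∑ e : Fin n → Bool,
        if u < |⨆ i, ∑ t, sgn (e t) * f i (x t e)| then (1:ℝ) else 0)
      ≤ (∑ e : Fin n → Bool,
          if u < (∑ t, ⨆ i, |f i (x t e)| ^ p) ^ ((1:ℝ)/p) then (1:ℝ) else 0)
        + ∑ e : Fin n → Bool,
            (if u < |⨆ i, ∑ t, sgn (e t) * b t e * f i (x t e)| then (1:ℝ) else 0) := by
    rw [← Finset.sum_add_distrib]
    exact Finset.sum_le_sum fun e _ => hpt e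
  have hcard : ((Finset.univ.filter fun e : Fin n → Bool =>
      |⨆ i, ∑ t, sgn (e t) * b t e * f i (x t e)| > u).card : ℝ)
      = ∑ e : Fin n → Bool,
          (if u < |⨆ i, ∑ t, sgn (e t) * b t e * f i (x t e)| then (1:ℝ) else 0) := by
    rw [Finset.card_filter]
    push_cast
    rfl
  have H := htail b hbpred hb01 u hu
  rw [hcard, div_eq_inv_mul] at H
  have hnum : Bp * (((2:ℝ)^n)⁻¹ * ∑ e : Fin n → Bool, ∑ t, ⨆ i, b t e * |f i (x t e)| ^ p)
      ≤ Bp * ((2:ℝ)^n)⁻¹ * ∑ e : Fin n → Bool,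
          min (∑ t, ⨆ i, |f i (x t e)| ^ p) (u ^ p) := by
    rw [mul_assoc]
    exact mul_le_mul_of_nonneg_left (mul_le_mul_of_nonneg_left
      (Finset.sum_le_sum fun e _ => htrunc e) hν.le) hBp
  have hH2 : Bp * (((2:ℝ)^n)⁻¹ * ∑ e : Fin n → Bool,
        ∑ t, ⨆ i, b t e * |f i (x t e)| ^ p) / u ^ p
      ≤ Bp * ((2:ℝ)^n)⁻¹ * ∑ e : Fin n → Bool,
          (min (∑ t, ⨆ i, |f i (x t e)| ^ p) (u ^ p) / u ^ p) := by
    rw [← Finset.sum_div, ← mul_div_assoc (Bp * ((2:ℝ)^n)⁻¹)]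
    exact div_le_div_of_nonneg_right hnum hup.le
  calc ((2:ℝ)^n)⁻¹ * ∑ e : Fin n → Bool,
        (if u < |⨆ i, ∑ t, sgn (e t) * f i (x t e)| then (1:ℝ) else 0)
      ≤ ((2:ℝ)^n)⁻¹ * ((∑ e : Fin n → Bool,
          if u < (∑ t, ⨆ i, |f i (x t e)| ^ p) ^ ((1:ℝ)/p) then (1:ℝ) else 0)
        + ∑ e : Fin n → Bool,
            (if u < |⨆ i, ∑ t, sgn (e t) * b t e * f i (x t e)| then (1:ℝ) else 0)) :=
        mul_le_mul_of_nonneg_left hsum1 hν.le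
    _ = ((2:ℝ)^n)⁻¹ * (∑ e : Fin n → Bool,
          if u < (∑ t, ⨆ i, |f i (x t e)| ^ p) ^ ((1:ℝ)/p) then (1:ℝ) else 0)
        + ((2:ℝ)^n)⁻¹ * (∑ e : Fin n → Bool,
            (if u < |⨆ i, ∑ t, sgn (e t) * b t e * f i (x t e)| then (1:ℝ) else 0)) := by
        rw [mul_add]
    _ ≤ ((2:ℝ)^n)⁻¹ * (∑ e : Fin n → Bool,
          if u < (∑ t, ⨆ i, |f i (x t e)| ^ p) ^ ((1:ℝ)/p) then (1:ℝ) else 0)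
        + Bp * (((2:ℝ)^n)⁻¹ * ∑ e : Fin n → Bool,
            ∑ t, ⨆ i, b t e * |f i (x t e)| ^ p) / u ^ p := add_le_add_right H _
    _ ≤ ((2:ℝ)^n)⁻¹ * (∑ e : Fin n → Bool,
          if u < (∑ t, ⨆ i, |f i (x t e)| ^ p) ^ ((1:ℝ)/p) then (1:ℝ) else 0)
        + Bp * ((2:ℝ)^n)⁻¹ * ∑ e : Fin n → Bool,
            (min (∑ t, ⨆ i, |f i (x t e)| ^ p) (u ^ p) / u ^ p) := add_le_add_right hH2 _
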